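/- Let V be a type, let r : V → V → Prop be a binary relation (a directed graph), and let s ≠ t be elements of V. An r-path from s to t is a finite sequence of pairwise distinct vertices starting at s and ending at t in which consecutive vertices are related by r; its arcs are the consecutive pairs. Suppose P_1, …, P_p are r-paths from s to t and for some indices a ≠ b and vertices u, v the arc (u,v) lies on P_a and the arc (v,u) lies on P_b. Then there exist r-paths P'_1, …, P'_p from s to t such that every shared arc of the family (P'_i) is a shared arc of the family (P_i), every arc occurring in some P'_i occurs in some P_j, and the arcs (u,v) and (v,u) do not both occur among P'_1, …, P'_p. -/

import Mathlib

/-- The arcs (consecutive pairs of vertices) of a finite vertex sequence. -/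
def arcs {V : Type*} (l : List V) : List (V × V) := l.zip l.tail

/-- `l` is an `r`-path from `s` to `t`: a finite sequence of pairwise distinct
vertices starting at `s`, ending at `t`, with consecutive vertices related by `r`. -/
def IsRPath {V : Type*} (r : V → V → Prop) (s t : V) (l : List V) : Prop :=
  l.Chain' r ∧ l.Nodup ∧ l.head? = some s ∧ l.getLast? = some t

/-- The set of shared arcs of a family of paths: arcs lying on two paths with
distinct indices. -/
def sharedArcs {V : Type*} {p : ℕ} (P : Fin p → List V) : Set (V × V) :=
  {e | ∃ i j, i ≠ j ∧ e ∈ arcs (P i) ∧ e ∈ arcs (P j)}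

section
variable {V : Type*}

lemma arcs_cons_cons (a b : V) (l : List V) : arcs (a::b::l) = (a,b) :: arcs (b::l) := rfl

lemma arcs_append_cons (A : List V) (x : V) (B : List V) :
    arcs (A ++ x :: B) = arcs (A ++ [x]) ++ arcs (x :: B) := by
  induction A with
  | nil => simp [arcs]
  | cons a A ih =>
    cases A with
    | nil => simp [arcs_cons_cons, arcs]
    | cons a' A' =>
      simp only [List.cons_append, arcs_cons_cons] at *
      rw [ih]

lemma mem_arcs_iff (x y : V) (l : List V) :
    (x, y) ∈ arcs l ↔ ∃ A B, l = A ++ x :: y :: B := by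
  constructor
  · induction l with
    | nil => simp [arcs]
    | cons a l ih =>
      cases l with
      | nil => simp [arcs]
      | cons b m =>
        rw [arcs_cons_cons]
        intro hmem
        rcases List.mem_cons.mp hmem with h | h
        · rw [Prod.mk.injEq] at h
          obtain ⟨rfl, rfl⟩ := h
          exact ⟨[], m, rfl⟩
        · obtain ⟨A, B, hAB⟩ := ih h
          exact ⟨a :: A, B, by rw [hAB]; rfl⟩
  · rintro ⟨A, B, rfl⟩
    rw [arcs_append_cons]
    simp [arcs_cons_cons]

lemma fst_mem_of_mem_arcs {e : V × V} {l : List V} (h : e ∈ arcs l) : e.1 ∈ l :=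
  (List.of_mem_zip (show (e.1, e.2) ∈ l.zip l.tail from h)).1

lemma snd_mem_tail_of_mem_arcs {e : V × V} {l : List V} (h : e ∈ arcs l) : e.2 ∈ l.tail :=
  (List.of_mem_zip (show (e.1, e.2) ∈ l.zip l.tail from h)).2

lemma chain'_iff_arcs (r : V → V → Prop) (l : List V) :
    l.Chain' r ↔ ∀ e ∈ arcs l, r e.1 e.2 := by
  induction l with
  | nil => simp [arcs, List.Chain']
  | cons a l ih =>
    cases l with
    | nil => simp [arcs, List.Chain']
    | cons b m =>
      rw [show List.Chain' r (a :: b :: m) ↔ r a b ∧ List.Chain' r (b :: m) from List.isChain_cons_cons, arcs_cons_cons, ih]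
      constructor
      · rintro ⟨h1, h2⟩ e he
        rcases List.mem_cons.mp he with h | h
        · rw [h]; exact h1
        · exact h2 e h
      · intro h
        exact ⟨h (a,b) List.mem_cons_self, fun e he => h e (List.mem_cons_of_mem _ he)⟩

lemma getLast?_append_cons (A : List V) (x : V) (B : List V) :
    (A ++ x :: B).getLast? = (x :: B).getLast? := by
  rw [List.getLast?_append]
  cases hB : (x :: B).getLast? with
  | none => simp at hB
  | some w => rfl

lemma head?_append_cons (A : List V) (x : V) (B C : List V) :
    (A ++ x :: B).head? = (A ++ x :: C).head? := by
  cases A <;> simp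

lemma sublist_pair_decomp (x : V) : ∀ l : List V, [x, x].Sublist l →
    ∃ A B C, l = A ++ x :: (B ++ x :: C) := by
  intro l
  induction l with
  | nil => intro h; simp at h
  | cons a l ih =>
    intro h
    cases h with
    | cons _ h' =>
      obtain ⟨A, B, C, rfl⟩ := ih h'
      exact ⟨a :: A, B, C, rfl⟩
    | cons_cons _ h' =>
      have hx : x ∈ l := List.singleton_sublist.mp h'
      obtain ⟨B, C, rfl⟩ := List.append_of_mem hx
      exact ⟨[], B, C, rfl⟩

lemma exists_nodup_shortcut' : ∀ (n : ℕ) (l : List V), l.length ≤ n →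
    ∃ m : List V, m.Nodup ∧ m.head? = l.head? ∧ m.getLast? = l.getLast? ∧ arcs m ⊆ arcs l := by
  intro n
  induction n with
  | zero =>
    intro l hl
    have : l = [] := List.length_eq_zero_iff.mp (Nat.le_zero.mp hl)
    exact ⟨l, by simp [this], rfl, rfl, fun e he => he⟩
  | succ n ih =>
    intro l hl
    by_cases h : l.Nodup
    · exact ⟨l, h, rfl, rfl, fun e he => he⟩
    · obtain ⟨x, hx⟩ := List.exists_duplicate_iff_not_nodup.mpr h
      obtain ⟨A, B, C, rfl⟩ := sublist_pair_decomp x _ (List.duplicate_iff_sublist.mp hx)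
      have hlen : (A ++ x :: C).length ≤ n := by
        simp only [List.length_append, List.length_cons] at hl ⊢
        omega
      obtain ⟨m, hm1, hm2, hm3, hm4⟩ := ih (A ++ x :: C) hlen
      refine ⟨m, hm1, ?_, ?_, ?_⟩
      · rw [hm2]; exact head?_append_cons A x C (B ++ x :: C)
      · rw [hm3, getLast?_append_cons, getLast?_append_cons A x (B ++ x :: C)]
        exact (getLast?_append_cons (x :: B) x C).symm
      · intro e he
        have h2 := hm4 he
        rw [arcs_append_cons] at h2
        rw [arcs_append_cons A x (B ++ x :: C),
          show arcs (x :: (B ++ x :: C)) = arcs ((x :: B) ++ [x]) ++ arcs (x :: C) from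
            arcs_append_cons (x :: B) x C]
        rcases List.mem_append.mp h2 with h1 | h1
        · exact List.mem_append.mpr (.inl h1)
        · exact List.mem_append.mpr (.inr (List.mem_append.mpr (.inr h1)))

lemma exists_nodup_shortcut (l : List V) :
    ∃ m : List V, m.Nodup ∧ m.head? = l.head? ∧ m.getLast? = l.getLast? ∧ arcs m ⊆ arcs l :=
  exists_nodup_shortcut' l.length l le_rfl

/-- Nodup facts for a split list. -/
lemma nodup_split {A : List V} {x y : V} {B : List V} (h : (A ++ x :: y :: B).Nodup) :
    x ∉ A ∧ y ∉ A ∧ x ≠ y ∧ x ∉ B ∧ y ∉ B ∧ List.Disjoint (A ++ [x]) (y :: B) := by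
  have h' : ((A ++ [x]) ++ (y :: B)).Nodup := by simpa using h
  obtain ⟨n1, n2, disj⟩ := List.nodup_append'.mp h'
  obtain ⟨nA, _, dA⟩ := List.nodup_append'.mp n1
  refine ⟨fun hxA => dA hxA (List.mem_singleton_self x), ?_, ?_, ?_, ?_, disj⟩
  · intro hyA
    exact disj (List.mem_append.mpr (.inl hyA)) List.mem_cons_self
  · intro hxy
    exact disj (List.mem_append.mpr (.inr (List.mem_singleton_self x)))
      (hxy ▸ List.mem_cons_self)
  · intro hxB
    exact disj (List.mem_append.mpr (.inr (List.mem_singleton_self x)))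
      (List.mem_cons_of_mem _ hxB)
  · intro hyB
    exact (List.nodup_cons.mp n2).1 hyB

lemma not_both_arcs {l : List V} (hl : l.Nodup) {u v : V}
    (h1 : (u,v) ∈ arcs l) (h2 : (v,u) ∈ arcs l) : False := by
  obtain ⟨A, B, rfl⟩ := (mem_arcs_iff u v l).mp h1
  obtain ⟨huA, hvA, huv, huB, hvB, disj⟩ := nodup_split hl
  rw [arcs_append_cons] at h2
  rcases List.mem_append.mp h2 with h | h
  · have := fst_mem_of_mem_arcs h
    rcases List.mem_append.mp this with h' | h'
    · exact hvA h'
    · exact huv (List.mem_singleton.mp h').symm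
  · rw [arcs_cons_cons] at h
    rcases List.mem_cons.mp h with h | h
    · rw [Prod.mk.injEq] at h; exact huv h.1.symm
    · have := snd_mem_tail_of_mem_arcs h
      simp only [List.tail_cons] at this
      exact huB this

lemma reroute {r : V → V → Prop} {s t : V} {p : ℕ} {P : Fin p → List V}
    (hP : ∀ i, IsRPath r s t (P i)) {a b : Fin p} (hab : a ≠ b) {u v : V}
    (hu : (u,v) ∈ arcs (P a)) (hv : (v,u) ∈ arcs (P b)) :
    ∃ P' : Fin p → List V,
      (∀ i, IsRPath r s t (P' i)) ∧
      (∀ e, e ∈ sharedArcs P' → e ∈ sharedArcs P) ∧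
      (∀ e i, e ∈ arcs (P' i) → ∃ j, e ∈ arcs (P j)) ∧
      (∀ i, (u,v) ∈ arcs (P' i) → i ≠ a ∧ (u,v) ∈ arcs (P i)) ∧
      (∀ i, (v,u) ∈ arcs (P' i) → i ≠ b ∧ (v,u) ∈ arcs (P i)) := by
  obtain ⟨A₁, B₁, hPa⟩ := (mem_arcs_iff u v _).mp hu
  obtain ⟨A₂, B₂, hPb⟩ := (mem_arcs_iff v u _).mp hv
  obtain ⟨huA₁, hvA₁, huv, huB₁, hvB₁, disj₁⟩ := nodup_split (hPa ▸ (hP a).2.1)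
  obtain ⟨hvA₂, huA₂, hvu, hvB₂, huB₂, disj₂⟩ := nodup_split (hPb ▸ (hP b).2.1)
  -- arc inclusions
  have subPa1 : arcs (A₁ ++ [u]) ⊆ arcs (P a) := by
    rw [hPa, arcs_append_cons A₁ u (v :: B₁)]
    exact fun e he => List.mem_append.mpr (.inl he)
  have subPa2 : arcs (v :: B₁) ⊆ arcs (P a) := by
    rw [hPa, arcs_append_cons A₁ u (v :: B₁), arcs_cons_cons]
    exact fun e he => List.mem_append.mpr (.inr (List.mem_cons_of_mem _ he))
  have subPb1 : arcs (u :: B₂) ⊆ arcs (P b) := by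
    rw [hPb, arcs_append_cons A₂ v (u :: B₂), arcs_cons_cons]
    exact fun e he => List.mem_append.mpr (.inr (List.mem_cons_of_mem _ he))
  have subPb2 : arcs (A₂ ++ [v]) ⊆ arcs (P b) := by
    rw [hPb, arcs_append_cons A₂ v (u :: B₂)]
    exact fun e he => List.mem_append.mpr (.inl he)
  -- the rerouted walks
  obtain ⟨Qa, nQa, hQa, lQa, aQa⟩ := exists_nodup_shortcut (A₁ ++ u :: B₂)
  obtain ⟨Qb, nQb, hQb, lQb, aQb⟩ := exists_nodup_shortcut (A₂ ++ v :: B₁)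
  rw [arcs_append_cons] at aQa aQb
  have arcQa : ∀ e ∈ arcs Qa, e ∈ arcs (A₁ ++ [u]) ∨ e ∈ arcs (u :: B₂) :=
    fun e he => List.mem_append.mp (aQa he)
  have arcQb : ∀ e ∈ arcs Qb, e ∈ arcs (A₂ ++ [v]) ∨ e ∈ arcs (v :: B₁) :=
    fun e he => List.mem_append.mp (aQb he)
  have arcQa' : ∀ e ∈ arcs Qa, e ∈ arcs (P a) ∨ e ∈ arcs (P b) := by
    intro e he
    rcases arcQa e he with h | h
    · exact .inl (subPa1 h)
    · exact .inr (subPb1 h)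
  have arcQb' : ∀ e ∈ arcs Qb, e ∈ arcs (P a) ∨ e ∈ arcs (P b) := by
    intro e he
    rcases arcQb e he with h | h
    · exact .inr (subPb2 h)
    · exact .inl (subPa2 h)
  -- Qa, Qb are r-paths from s to t
  have pathQa : IsRPath r s t Qa := by
    refine ⟨?_, nQa, ?_, ?_⟩
    · rw [chain'_iff_arcs]
      intro e he
      rcases arcQa' e he with h | h
      · exact (chain'_iff_arcs r _).mp (hP a).1 e h
      · exact (chain'_iff_arcs r _).mp (hP b).1 e h
    · rw [hQa, head?_append_cons A₁ u B₂ (v :: B₁), ← hPa]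
      exact (hP a).2.2.1
    · rw [lQa, getLast?_append_cons, show (u :: B₂).getLast? = ([v] ++ u :: B₂).getLast? from
        (getLast?_append_cons [v] u B₂).symm, show [v] ++ u :: B₂ = v :: u :: B₂ from rfl,
        show (v :: u :: B₂).getLast? = (A₂ ++ v :: u :: B₂).getLast? from
        (getLast?_append_cons A₂ v (u :: B₂)).symm, ← hPb]
      exact (hP b).2.2.2
  have pathQb : IsRPath r s t Qb := by
    refine ⟨?_, nQb, ?_, ?_⟩
    · rw [chain'_iff_arcs]
      intro e he
      rcases arcQb' e he with h | h
      · exact (chain'_iff_arcs r _).mp (hP a).1 e h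
      · exact (chain'_iff_arcs r _).mp (hP b).1 e h
    · rw [hQb, head?_append_cons A₂ v B₁ (u :: B₂), ← hPb]
      exact (hP b).2.2.1
    · rw [lQb, getLast?_append_cons, show (v :: B₁).getLast? = ([u] ++ v :: B₁).getLast? from
        (getLast?_append_cons [u] v B₁).symm, show [u] ++ v :: B₁ = u :: v :: B₁ from rfl,
        show (u :: v :: B₁).getLast? = (A₁ ++ u :: v :: B₁).getLast? from
        (getLast?_append_cons A₁ u (v :: B₁)).symm, ← hPa]
      exact (hP a).2.2.2
  -- exclusion of the two arcs
  have noUVa : (u, v) ∉ arcs Qa := by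
    intro h
    rcases arcQa _ h with h | h
    · have h' := List.tail_subset _ (snd_mem_tail_of_mem_arcs h)
      rcases List.mem_append.mp h' with h' | h'
      · exact hvA₁ h'
      · exact huv (List.mem_singleton.mp h').symm
    · have h' := snd_mem_tail_of_mem_arcs h
      simp only [List.tail_cons] at h'
      exact hvB₂ h'
  have noVUa : (v, u) ∉ arcs Qa := by
    intro h
    rcases arcQa _ h with h | h
    · have h' := fst_mem_of_mem_arcs h
      rcases List.mem_append.mp h' with h' | h'
      · exact hvA₁ h'
      · exact huv (List.mem_singleton.mp h').symm
    · have h' := fst_mem_of_mem_arcs h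
      rcases List.mem_cons.mp h' with h' | h'
      · exact hvu h'
      · exact hvB₂ h'
  have noUVb : (u, v) ∉ arcs Qb := by
    intro h
    rcases arcQb _ h with h | h
    · have h' := fst_mem_of_mem_arcs h
      rcases List.mem_append.mp h' with h' | h'
      · exact huA₂ h'
      · exact hvu (List.mem_singleton.mp h').symm
    · have h' := fst_mem_of_mem_arcs h
      rcases List.mem_cons.mp h' with h' | h'
      · exact huv h'
      · exact huB₁ h'
  have noVUb : (v, u) ∉ arcs Qb := by
    intro h
    rcases arcQb _ h with h | h
    · have h' := List.tail_subset _ (snd_mem_tail_of_mem_arcs h)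
      rcases List.mem_append.mp h' with h' | h'
      · exact huA₂ h'
      · exact hvu (List.mem_singleton.mp h').symm
    · have h' := snd_mem_tail_of_mem_arcs h
      simp only [List.tail_cons] at h'
      exact huB₁ h'
  -- the key fact for shared arcs
  have key : ∀ e, e ∈ arcs Qa → e ∈ arcs Qb → e ∈ arcs (P a) ∧ e ∈ arcs (P b) := by
    intro e hea heb
    by_cases hB : e ∈ arcs (P b)
    · by_cases hA : e ∈ arcs (P a)
      · exact ⟨hA, hB⟩
      · exfalso
        have h1 : e ∈ arcs (u :: B₂) := by
          rcases arcQa e hea with h | h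
          · exact absurd (subPa1 h) hA
          · exact h
        have h2 : e ∈ arcs (A₂ ++ [v]) := by
          rcases arcQb e heb with h | h
          · exact h
          · exact absurd (subPa2 h) hA
        have m1 := snd_mem_tail_of_mem_arcs h1
        simp only [List.tail_cons] at m1
        have m2 := List.tail_subset _ (snd_mem_tail_of_mem_arcs h2)
        exact disj₂ m2 (List.mem_cons_of_mem _ m1)
    · exfalso
      have h1 : e ∈ arcs (A₁ ++ [u]) := by
        rcases arcQa e hea with h | h
        · exact h
        · exact absurd (subPb1 h) hB
      have h2 : e ∈ arcs (v :: B₁) := by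
        rcases arcQb e heb with h | h
        · exact absurd (subPb2 h) hB
        · exact h
      have m1 := List.tail_subset _ (snd_mem_tail_of_mem_arcs h1)
      have m2 := snd_mem_tail_of_mem_arcs h2
      simp only [List.tail_cons] at m2
      exact disj₁ m1 (List.mem_cons_of_mem _ m2)
  classical
  set P' : Fin p → List V := fun i => if i = a then Qa else if i = b then Qb else P i
    with hP'def
  have P'a : P' a = Qa := by simp [hP'def]
  have P'b : P' b = Qb := by simp [hP'def, (Ne.symm hab : b ≠ a)]
  have P'o : ∀ i, i ≠ a → i ≠ b → P' i = P i := by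
    intro i h1 h2; simp [hP'def, h1, h2]
  refine ⟨P', ?_, ?_, ?_, ?_, ?_⟩
  · intro i
    by_cases h1 : i = a
    · subst h1; rw [P'a]; exact pathQa
    · by_cases h2 : i = b
      · subst h2; rw [P'b]; exact pathQb
      · rw [P'o i h1 h2]; exact hP i
  · rintro e ⟨i, j, hij, hi, hj⟩
    have outside : ∀ m : Fin p, m ≠ a → m ≠ b →
        (e ∈ arcs (P a) ∨ e ∈ arcs (P b)) → e ∈ arcs (P m) → e ∈ sharedArcs P := by
      intro m hma hmb hor hm
      rcases hor with h | h
      · exact ⟨a, m, fun hh => hma hh.symm, h, hm⟩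
      · exact ⟨b, m, fun hh => hmb hh.symm, h, hm⟩
    by_cases hia : i = a
    · subst hia
      rw [P'a] at hi
      by_cases hjb : j = b
      · subst hjb
        rw [P'b] at hj
        obtain ⟨h1, h2⟩ := key e hi hj
        exact ⟨_, _, hab, h1, h2⟩
      · rw [P'o j (Ne.symm hij) hjb] at hj
        exact outside j (Ne.symm hij) hjb (arcQa' e hi) hj
    · by_cases hib : i = b
      · subst hib
        rw [P'b] at hi
        by_cases hja : j = a
        · subst hja
          rw [P'a] at hj
          obtain ⟨h1, h2⟩ := key e hj hi
          exact ⟨_, _, hab, h1, h2⟩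
        · rw [P'o j hja (Ne.symm hij)] at hj
          exact outside j hja (Ne.symm hij) (arcQb' e hi) hj
      · rw [P'o i hia hib] at hi
        by_cases hja : j = a
        · subst hja
          rw [P'a] at hj
          exact outside i hia hib (arcQa' e hj) hi
        · by_cases hjb : j = b
          · subst hjb
            rw [P'b] at hj
            exact outside i hia hib (arcQb' e hj) hi
          · rw [P'o j hja hjb] at hj
            exact ⟨i, j, hij, hi, hj⟩
  · intro e i he
    by_cases h1 : i = a
    · rw [h1, P'a] at he
      rcases arcQa' e he with h | h
      exacts [⟨a, h⟩, ⟨b, h⟩]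
    · by_cases h2 : i = b
      · rw [h2, P'b] at he
        rcases arcQb' e he with h | h
        exacts [⟨a, h⟩, ⟨b, h⟩]
      · rw [P'o i h1 h2] at he; exact ⟨i, he⟩
  · intro i hi
    by_cases h1 : i = a
    · rw [h1, P'a] at hi; exact absurd hi noUVa
    · by_cases h2 : i = b
      · rw [h2, P'b] at hi; exact absurd hi noUVb
      · rw [P'o i h1 h2] at hi; exact ⟨h1, hi⟩
  · intro i hi
    by_cases h1 : i = a
    · rw [h1, P'a] at hi; exact absurd hi noVUa
    · by_cases h2 : i = b
      · rw [h2, P'b] at hi; exact absurd hi noVUb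
      · rw [P'o i h1 h2] at hi; exact ⟨h2, hi⟩
end

lemma aux_cancel (r : V → V → Prop) (s t : V) (p : ℕ) (u v : V) :
    ∀ (n : ℕ) (P : Fin p → List V), (∀ i, IsRPath r s t (P i)) →
      {i : Fin p | (u,v) ∈ arcs (P i)}.ncard ≤ n →
      ∃ P' : Fin p → List V,
        (∀ i, IsRPath r s t (P' i)) ∧
        (∀ e, e ∈ sharedArcs P' → e ∈ sharedArcs P) ∧
        (∀ e, ∀ i, e ∈ arcs (P' i) → ∃ j, e ∈ arcs (P j)) ∧
        ¬ ((∃ i, (u, v) ∈ arcs (P' i)) ∧ (∃ i, (v, u) ∈ arcs (P' i))) := by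
  intro n
  induction n with
  | zero =>
    intro P hP hcard
    refine ⟨P, hP, fun e he => he, fun e i he => ⟨i, he⟩, ?_⟩
    rintro ⟨⟨i, hi⟩, -⟩
    have hemp : {i : Fin p | (u,v) ∈ arcs (P i)} = ∅ := by
      rwa [Nat.le_zero, Set.ncard_eq_zero (Set.toFinite _)] at hcard
    rw [Set.eq_empty_iff_forall_notMem] at hemp
    exact hemp i hi
  | succ n ih =>
    intro P hP hcard
    by_cases hEx : (∃ i, (u,v) ∈ arcs (P i)) ∧ (∃ i, (v,u) ∈ arcs (P i))
    · obtain ⟨⟨a, ha⟩, ⟨b, hb⟩⟩ := hEx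
      have hab : a ≠ b := by
        rintro rfl
        exact not_both_arcs (hP a).2.1 ha hb
      obtain ⟨P'', h1, h2, h3, h4, h5⟩ := reroute hP hab ha hb
      have hsub : {i : Fin p | (u,v) ∈ arcs (P'' i)} ⊆
          {i : Fin p | (u,v) ∈ arcs (P i)} \ {a} := by
        intro i hi
        obtain ⟨hne, hmem⟩ := h4 i hi
        exact ⟨hmem, hne⟩
      have hcard' : {i : Fin p | (u,v) ∈ arcs (P'' i)}.ncard ≤ n := by
        have e1 := Set.ncard_le_ncard hsub (Set.toFinite _)
        have e2 : ({i : Fin p | (u,v) ∈ arcs (P i)} \ {a}).ncard =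
            {i : Fin p | (u,v) ∈ arcs (P i)}.ncard - 1 :=
          Set.ncard_diff_singleton_of_mem (s := {i : Fin p | (u,v) ∈ arcs (P i)}) ha
        omega
      obtain ⟨P', g1, g2, g3, g4⟩ := ih P'' h1 hcard'
      refine ⟨P', g1, fun e he => h2 e (g2 e he), ?_, g4⟩
      intro e i he
      obtain ⟨j, hj⟩ := g3 e i he
      exact h3 e j hj
    · exact ⟨P, hP, fun e he => he, fun e i he => ⟨i, he⟩, hEx⟩


/-- If a family of `r`-paths from `s` to `t` uses an arc `(u,v)` on one path and
its reverse `(v,u)` on another, then the family can be rerouted so that no new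
shared arcs and no new arcs appear, and `(u,v)`, `(v,u)` are not both used. -/
theorem stmt11 {V : Type*} (r : V → V → Prop) (s t : V) (hst : s ≠ t)
    (p : ℕ) (P : Fin p → List V) (hP : ∀ i, IsRPath r s t (P i))
    (a b : Fin p) (hab : a ≠ b) (u v : V)
    (hu : (u, v) ∈ arcs (P a)) (hv : (v, u) ∈ arcs (P b)) :
    ∃ P' : Fin p → List V,
      (∀ i, IsRPath r s t (P' i)) ∧
      (∀ e, e ∈ sharedArcs P' → e ∈ sharedArcs P) ∧
      (∀ e, ∀ i, e ∈ arcs (P' i) → ∃ j, e ∈ arcs (P j)) ∧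
      ¬ ((∃ i, (u, v) ∈ arcs (P' i)) ∧ (∃ i, (v, u) ∈ arcs (P' i))) :=
  aux_cancel r s t p u v {i : Fin p | (u,v) ∈ arcs (P i)}.ncard P hP le_rfl
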